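/- Let Σ be a finite alphabet with a fixed linear order and let L ⊆ Σ^ω be an ω-language. Let S = (S_+, S_−) be a sample of ultimately periodic words, given as finite sets of pairs (u, v) ∈ Σ* × Σ⁺ representing the words u v^ω, that is consistent with L (every word of S_+ lies in L and no word of S_− does) and characteristic for ∼_L, i.e.: (i) every x ∈ mtr(L) is a prefix of some word of S_+, and (ii) for all û ∈ mr(L) and x ∈ mtr(L) with û ≁_L x there exists w ∈ Σ^ω such that ûw and xw are both words of S_+ ∪ S_− and ûw is a word of S_+ if and only if xw is a word of S_−. Let k = l_b + l_e², where l_b is the maximal length of u and l_e the maximal length of v over all pairs (u, v) in S_+ ∪ S_−. Then every û ∈ mr(L) is a prefix of some word of S_+ and satisfies |û| ≤ k. -/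

import Mathlib

/-- Concatenation of a finite word with an infinite word. -/
def catWord {α : Type*} (u : List α) (w : ℕ → α) : ℕ → α :=
  fun n => if h : n < u.length then u.get ⟨n, h⟩ else w (n - u.length)

open Classical in
/-- The ultimately periodic word `u v^ω` represented by the pair `p = (u, v)`
(meaningful when `v ≠ []`; an arbitrary letter is used otherwise). -/
noncomputable def upw {α : Type*} [Nonempty α] (p : List α × List α) : ℕ → α :=
  fun n =>
    if h : n < p.1.length then p.1.get ⟨n, h⟩
    else if h2 : p.2 = [] then Classical.arbitrary α
    else p.2.get ⟨(n - p.1.length) % p.2.length,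
      Nat.mod_lt _ (List.length_pos_iff.mpr h2)⟩

/-- `u` is a (finite) prefix of the infinite word `w`. -/
def IsPrefixW {α : Type*} (u : List α) (w : ℕ → α) : Prop :=
  ∀ i, (h : i < u.length) → w i = u.get ⟨i, h⟩

/-- The residual language `u⁻¹L = {w : uw ∈ L}`. -/
def Residual {α : Type*} (L : Set (ℕ → α)) (u : List α) : Set (ℕ → α) :=
  {w | catWord u w ∈ L}

/-- The set of finite prefixes of words of an ω-language `L`. -/
def prfL {α : Type*} (L : Set (ℕ → α)) : Set (List α) :=
  {u | ∃ w ∈ L, IsPrefixW u w}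

/-- Length-lexicographic order `u ⪯ v` on finite words over a linearly
ordered alphabet. -/
def llex {α : Type*} [LinearOrder α] (u v : List α) : Prop :=
  u.length < v.length ∨
    (u.length = v.length ∧ (u = v ∨ List.Lex (· < ·) u v))

/-- The set of minimal representatives of `∼_L`: length-lexicographically
minimal elements of `prf(L)` in their `∼_L`-class. -/
def mr {α : Type*} [LinearOrder α] (L : Set (ℕ → α)) : Set (List α) :=
  {u | u ∈ prfL L ∧ ∀ v : List α, Residual L v = Residual L u → llex u v}

/-- The set of minimal transition representatives of `∼_L`. -/
def mtr {α : Type*} [LinearOrder α] (L : Set (ℕ → α)) : Set (List α) :=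
  {x | ∃ u ∈ mr L, ∃ a : α, x = u ++ [a] ∧ x ∈ prfL L}

/-! ### Auxiliary lemmas -/

theorem catWord_lt' {α : Type*} (u : List α) (w : ℕ → α) {n : ℕ} (h : n < u.length) :
    catWord u w n = u.get ⟨n, h⟩ := dif_pos h

theorem catWord_ge' {α : Type*} (u : List α) (w : ℕ → α) {n : ℕ} (h : u.length ≤ n) :
    catWord u w n = w (n - u.length) := dif_neg (by omega)

theorem catWord_append' {α : Type*} (u s : List α) (w : ℕ → α) :
    catWord (u ++ s) w = catWord u (catWord s w) := by
  funext n
  rcases lt_or_ge n u.length with h | h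
  · rw [catWord_lt' _ _ (by simp; omega), catWord_lt' _ _ h]
    simp [List.getElem_append_left h]
  · rw [catWord_ge' _ _ h]
    rcases lt_or_ge n (u.length + s.length) with h2 | h2
    · rw [catWord_lt' _ _ (by simp; omega), catWord_lt' _ _ (by omega)]
      simp [List.getElem_append_right h]
    · rw [catWord_ge' _ _ (by simp; omega), catWord_ge' _ _ (by omega)]
      congr 1; simp; omega

theorem isPrefixW_mono' {α : Type*} {u x : List α} {w : ℕ → α} (hp : u <+: x)
    (h : IsPrefixW x w) : IsPrefixW u w := by
  intro i hi
  have := h i (hi.trans_le hp.length_le)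
  simpa [List.get_eq_getElem, hp.getElem hi] using this

theorem prfL_prefix' {α : Type*} {L : Set (ℕ → α)} {u x : List α} (hp : u <+: x)
    (h : x ∈ prfL L) : u ∈ prfL L := by
  obtain ⟨w, hw, hpre⟩ := h
  exact ⟨w, hw, isPrefixW_mono' hp hpre⟩

theorem residual_append' {α : Type*} {L : Set (ℕ → α)} {a b : List α}
    (h : Residual L a = Residual L b) (s : List α) :
    Residual L (a ++ s) = Residual L (b ++ s) := by
  ext w
  have key : ∀ c : List α, w ∈ Residual L (c ++ s) ↔ catWord s w ∈ Residual L c := by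
    intro c; simp [Residual, catWord_append']
  rw [key, key, h]

theorem lex_tri' {α : Type*} [LinearOrder α] : ∀ (a b : List α), a ≠ b → a.length = b.length →
    List.Lex (·<·) a b ∨ List.Lex (·<·) b a
  | [], [], h, _ => absurd rfl h
  | [], _::_, _, hl => by simp at hl
  | _::_, [], _, hl => by simp at hl
  | x::a, y::b, h, hl => by
    rcases lt_trichotomy x y with h1|h1|h1
    · exact Or.inl (List.Lex.rel h1)
    · subst h1
      rcases lex_tri' a b (fun hh => h (by rw [hh])) (by simpa using hl) with h2|h2
      · exact Or.inl (List.Lex.cons h2)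
      · exact Or.inr (List.Lex.cons h2)
    · exact Or.inr (List.Lex.rel h1)

theorem lex_append' {α : Type*} [LinearOrder α] {a b : List α} (s : List α)
    (h : List.Lex (·<·) a b) (hl : a.length = b.length) :
    List.Lex (·<·) (a ++ s) (b ++ s) := by
  induction h with
  | nil => simp at hl
  | cons _ ih => exact List.Lex.cons (ih (by simpa using hl))
  | rel h1 => exact List.Lex.rel h1

theorem lex_asymm' {α : Type*} [LinearOrder α] {a b : List α}
    (h : List.Lex (·<·) a b) (h2 : List.Lex (·<·) b a) : False := by
  have := List.Lex.asymm (α := α) (r := (·<·))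
  exact this.asymm a b h h2

theorem mr_prefix' {α : Type*} [LinearOrder α] {L : Set (ℕ → α)} {u x : List α}
    (hp : u <+: x) (hx : x ∈ mr L) : u ∈ mr L := by
  refine ⟨prfL_prefix' hp hx.1, ?_⟩
  intro v hv
  obtain ⟨s, rfl⟩ := hp
  have hres : Residual L (v ++ s) = Residual L (u ++ s) := residual_append' hv s
  have hllex := hx.2 (v ++ s) hres
  rcases hllex with h1 | ⟨h1, h2⟩
  · left; simp at h1; omega
  · simp at h1
    right
    refine ⟨h1, ?_⟩
    by_cases huv : u = v
    · exact Or.inl huv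
    rcases h2 with h2 | h2
    · exact Or.inl (List.append_cancel_right h2)
    · rcases lex_tri' u v huv h1 with h3 | h3
      · exact Or.inr h3
      · exact absurd h2 (fun hh => lex_asymm' hh (lex_append' s h3 h1.symm))

theorem periodic_mul' {α : Type*} {W : ℕ → α} {r : ℕ} (H : ∀ n, W (n + r) = W n) :
    ∀ (j n : ℕ), W (n + r * j) = W n := by
  intro j
  induction j with
  | zero => simp
  | succ j ih =>
    intro n
    have e : n + r * (j + 1) = (n + r) + r * j := by ring
    rw [e, ih, H]

theorem periodic_mod' {α : Type*} {W : ℕ → α} {r : ℕ} (H : ∀ n, W (n + r) = W n)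
    (m : ℕ) (hm : r ∣ m) (n : ℕ) : W n = W (n % m) := by
  obtain ⟨c, rfl⟩ := hm
  conv_lhs => rw [← Nat.mod_add_div n (r * c)]
  have e : n % (r * c) + r * c * (n / (r * c)) = n % (r * c) + r * (c * (n / (r * c))) := by
    ring
  rw [e, periodic_mul' H]

/-- The combinatorial core: if `W` is globally `r`-periodic and `k`-periodic on the
prefix of length `d*k` with `r ≤ d`, then `W` is globally `k`-periodic. -/
theorem periodic_core' {α : Type*} {W : ℕ → α} {r k d : ℕ} (hr : 1 ≤ r) (hk : 1 ≤ k)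
    (hrd : r ≤ d)
    (H1 : ∀ n, W (n + r) = W n) (H2 : ∀ m, m + k < d * k → W (m + k) = W m) :
    ∀ n, W (n + k) = W n := by
  have pre : ∀ m, m < d * k → W m = W (m % k) := by
    intro m
    induction m using Nat.strong_induction_on with
    | _ m ih =>
      intro hm
      rcases lt_or_ge m k with h | h
      · rw [Nat.mod_eq_of_lt h]
      · have e : m = (m - k) + k := by omega
        rw [Nat.mod_eq_sub_mod h, ← ih (m - k) (by omega) (by omega)]
        conv_lhs => rw [e]
        exact H2 (m - k) (by omega)
  have main : ∀ n, W n = W (n % k) := by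
    intro n
    have h1 : W n = W (n % (r * k)) := periodic_mod' H1 (r * k) ⟨k, rfl⟩ n
    have h2 : n % (r * k) < d * k :=
      lt_of_lt_of_le (Nat.mod_lt _ (by positivity)) (Nat.mul_le_mul_right k hrd)
    rw [h1, pre _ h2, Nat.mod_mod_of_dvd n ⟨r, by ring⟩]
  intro n
  rw [main (n + k), main n, Nat.add_mod_right]

theorem upw_period' {α : Type*} [Nonempty α] (p : List α × List α) (hp2 : p.2 ≠ [])
    {n : ℕ} (h : p.1.length ≤ n) : upw p (n + p.2.length) = upw p n := by
  have hk : 0 < p.2.length := List.length_pos_iff.mpr hp2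
  unfold upw
  rw [dif_neg (by omega), dif_neg hp2, dif_neg (by omega), dif_neg hp2]
  congr 1
  apply Fin.ext
  show (n + p.2.length - p.1.length) % p.2.length = (n - p.1.length) % p.2.length
  have e : n + p.2.length - p.1.length = (n - p.1.length) + p.2.length := by omega
  rw [e, Nat.add_mod_right]

/-- If a sample `(S₊, S₋)` of ultimately periodic words (given
as pairs `(u, v)` representing `u v^ω`, with `v ≠ []`) is consistent with `L`
and characteristic for `∼_L`, then every minimal representative `û ∈ mr(L)`
is a prefix of some positive sample word and satisfies `|û| ≤ l_b + l_e²`,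
where `l_b` and `l_e` are the maximal lengths of the spoke and loop parts of
the sample words. -/
theorem mr_prefixes_and_bound {α : Type*} [Fintype α] [Nonempty α] [LinearOrder α]
    (L : Set (ℕ → α))
    (Splus Sminus : Finset (List α × List α))
    (hred : ∀ p ∈ Splus ∪ Sminus, p.2 ≠ [])
    (hdisj : ∀ p ∈ Splus, ∀ q ∈ Sminus, upw p ≠ upw q)
    (hconsP : ∀ p ∈ Splus, upw p ∈ L)
    (hconsN : ∀ p ∈ Sminus, upw p ∉ L)
    (hchar1 : ∀ x ∈ mtr L, ∃ p ∈ Splus, IsPrefixW x (upw p))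
    (hchar2 : ∀ u ∈ mr L, ∀ x ∈ mtr L, Residual L u ≠ Residual L x →
      ∃ w : ℕ → α,
        (∃ p ∈ Splus ∪ Sminus, upw p = catWord u w) ∧
        (∃ p ∈ Splus ∪ Sminus, upw p = catWord x w) ∧
        ((∃ p ∈ Splus, upw p = catWord u w) ↔
          ∃ q ∈ Sminus, upw q = catWord x w)) :
    ∀ u ∈ mr L,
      (∃ p ∈ Splus, IsPrefixW u (upw p)) ∧
      u.length ≤ (Splus ∪ Sminus).sup (fun p => p.1.length) +
        ((Splus ∪ Sminus).sup (fun p => p.2.length)) ^ 2 := by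
  classical
  set lb := (Splus ∪ Sminus).sup (fun p => p.1.length) with hlb
  set le := (Splus ∪ Sminus).sup (fun p => p.2.length) with hle
  -- Part 1 : every `u ∈ mr L` is a prefix of a positive sample word
  have posPre : ∀ u ∈ mr L, ∃ p ∈ Splus, IsPrefixW u (upw p) := by
    intro u hu
    obtain ⟨Wd, hWd, hpre⟩ := hu.1
    have hpre2 : IsPrefixW (u ++ [Wd u.length]) Wd := by
      intro i hi
      have hi' : i < u.length + 1 := by simpa using hi
      rcases lt_or_ge i u.length with h | h
      · rw [hpre i h]
        simp [List.get_eq_getElem, List.getElem_append_left h]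
      · have : i = u.length := by omega
        subst this
        simp [List.get_eq_getElem]
    have hmtr : u ++ [Wd u.length] ∈ mtr L :=
      ⟨u, hu, Wd u.length, rfl, ⟨Wd, hWd, hpre2⟩⟩
    obtain ⟨p, hp, hp2⟩ := hchar1 _ hmtr
    exact ⟨p, hp, isPrefixW_mono' (List.prefix_append u _) hp2⟩
  intro u hu
  refine ⟨posPre u hu, ?_⟩
  by_contra hlen
  push_neg at hlen
  obtain ⟨p, hpS, hpre⟩ := posPre u hu
  have hpU : p ∈ Splus ∪ Sminus := Finset.mem_union_left _ hpS
  have hv : p.2 ≠ [] := hred p hpU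
  set N := u.length with hN
  set k := p.2.length with hkdef
  have hk : 1 ≤ k := List.length_pos_iff.mpr hv
  have hble : p.1.length ≤ lb := Finset.le_sup (f := fun p => p.1.length) hpU
  have hkle : k ≤ le := Finset.le_sup (f := fun p => p.2.length) hpU
  have hle1 : 1 ≤ le := hk.trans hkle
  set d := le with hd
  have hdk2 : d * k ≤ le ^ 2 := by
    have : d * k ≤ le * le := Nat.mul_le_mul_left le hkle
    simpa [pow_two] using this
  have hNbig : lb + le ^ 2 < N := hlen
  set Q := N - d * k with hQdef
  have hQ : lb < Q := by omega
  have hQN : Q + d * k = N := by omega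
  have hQltN : Q < N := by
    have : 1 ≤ d * k := Nat.one_le_iff_ne_zero.mpr (by positivity)
    omega
  set q : List α := u.take Q with hqdef
  have hq_len : q.length = Q := by
    rw [hqdef, List.length_take]; omega
  have hq_pre : q <+: u := List.take_prefix Q u
  have hq_mr : q ∈ mr L := mr_prefix' hq_pre hu
  have hne : u ≠ [] := by
    intro h
    rw [h] at hN
    simp at hN
    omega
  have hu_mtr : u ∈ mtr L := by
    refine ⟨u.dropLast, mr_prefix' (List.dropLast_prefix u) hu, u.getLast hne,
      (List.dropLast_append_getLast hne).symm, hu.1⟩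
  have hneq : Residual L q ≠ Residual L u := by
    intro h
    have := hu.2 q h
    rcases this with h1 | ⟨h1, _⟩
    · rw [hq_len] at h1; omega
    · rw [hq_len] at h1; omega
  obtain ⟨w, ⟨p₁, hp₁, hw₁⟩, ⟨p₂, hp₂, hw₂⟩, hiff⟩ := hchar2 q hq_mr u hu_mtr hneq
  set s : List α := u.drop Q with hsdef
  have hs_len : s.length = d * k := by
    rw [hsdef, List.length_drop]; omega
  have hsplit : u = q ++ s := (List.take_append_drop Q u).symm
  set W : ℕ → α := catWord s w with hWdef
  have hw₂' : upw p₂ = catWord q W := by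
    rw [hw₂, hsplit, catWord_append']
  have hWval : ∀ n, W n = upw p₂ (Q + n) := by
    intro n
    rw [hw₂', catWord_ge' _ _ (by omega : q.length ≤ Q + n)]
    congr 1; omega
  set r := p₂.2.length with hrdef
  have hv₂ : p₂.2 ≠ [] := hred p₂ hp₂
  have hr1 : 1 ≤ r := List.length_pos_iff.mpr hv₂
  have hrle : r ≤ le := Finset.le_sup (f := fun p => p.2.length) hp₂
  have hble₂ : p₂.1.length ≤ lb := Finset.le_sup (f := fun p => p.1.length) hp₂
  have H1 : ∀ n, W (n + r) = W n := by
    intro n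
    rw [hWval, hWval]
    have e : Q + (n + r) = (Q + n) + r := by ring
    rw [e]
    exact upw_period' p₂ hv₂ (by omega)
  have e1 : ∀ j, j < d * k → W j = upw p (Q + j) := by
    intro j hj
    have hjs : j < s.length := by omega
    rw [hWdef, catWord_lt' _ _ hjs]
    have hQj : Q + j < N := by omega
    have hdrop : s.get ⟨j, hjs⟩ = u.get ⟨Q + j, hQj⟩ := by
      simp [hsdef, List.get_eq_getElem, List.getElem_drop]
    rw [hdrop, ← hpre (Q + j) hQj]
  have H2 : ∀ m, m + k < d * k → W (m + k) = W m := by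
    intro m hm
    rw [e1 m (by omega), e1 (m + k) hm]
    have e : Q + (m + k) = (Q + m) + k := by ring
    rw [e]
    exact upw_period' p hv (by omega)
  have core : ∀ n, W (n + k) = W n := periodic_core' hr1 hk hrle H1 H2
  have hperiod_dk : ∀ n, W (n + d * k) = W n := by
    intro n
    have : W (n + k * d) = W n := periodic_mul' core d n
    rwa [Nat.mul_comm k d] at this
  have hwW : w = W := by
    funext n
    have : w n = W (d * k + n) := by
      rw [hWdef, catWord_ge' _ _ (by omega : s.length ≤ d * k + n)]
      congr 1; omega
    rw [this, Nat.add_comm (d * k) n, hperiod_dk]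
  have key : catWord u w = catWord q w := by
    rw [hsplit, catWord_append', ← hWdef, ← hwW]
  rcases Finset.mem_union.mp hp₁ with hP | hM
  · obtain ⟨q', hq', he⟩ := hiff.mp ⟨p₁, hP, hw₁⟩
    exact hdisj p₁ hP q' hq' (by rw [hw₁, ← key, ← he])
  · obtain ⟨pp, hpp, he⟩ := hiff.mpr ⟨p₁, hM, hw₁.trans key.symm⟩
    exact hdisj pp hpp p₁ hM (he.trans hw₁.symm)
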